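/- For u ∈ C⁵([0,1]) with prescribed exact endpoint derivative values, the Hermitian derivative satisfies (σ_x (u^{(1)})* − δ_x u*)_j = (h⁴/180)u^{(5)}(x_j) + O(h⁶) at each interior point j. -/

import Mathlib

open Set Finset
set_option maxHeartbeats 1000000

lemma idw_eq_glob {f : ℝ → ℝ} {s : Set ℝ} (hs : UniqueDiffOn ℝ s) {M : ℕ}
    (hf : ContDiff ℝ (M : ℕ) f) :
    ∀ n ≤ M, ∀ x ∈ s, iteratedDerivWithin n f s x = iteratedDeriv n f x := by
  intro n
  induction n with
  | zero => intro _ x hx; simp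
  | succ n ih =>
    intro hn x hx
    rw [iteratedDerivWithin_succ,
      derivWithin_congr (fun y hy => ih (by omega) y hy) (ih (by omega) x hx),
      iteratedDeriv_succ]
    exact ((hf.differentiable_iteratedDeriv n (by exact_mod_cast hn)).differentiableAt).derivWithin
      (hs x hx)

lemma taylor_right {n : ℕ} {f : ℝ → ℝ} (hf : ContDiff ℝ ((n:ℕ) + 1) f) {x t K : ℝ} (ht : 0 ≤ t)
    (hK : ∀ y ∈ Icc x (x + t), |iteratedDeriv (n + 1) f y| ≤ K) :
    |f (x + t) - ∑ i ∈ Finset.range (n + 1), iteratedDeriv i f x * t ^ i / i.factorial|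
      ≤ K * t ^ (n + 1) := by
  have hK0 : 0 ≤ K := le_trans (abs_nonneg _) (hK x ⟨le_refl _, by linarith⟩)
  rcases eq_or_lt_of_le ht with rfl | htpos
  · simp [Finset.sum_range_succ']
  · have hab : x ≤ x + t := by linarith
    have hud : UniqueDiffOn ℝ (Icc x (x + t)) := uniqueDiffOn_Icc (by linarith)
    have idw := idw_eq_glob hud (M := n + 1) (by exact_mod_cast hf)
    have H := taylor_mean_remainder_bound (f := f) (a := x) (b := x + t) (C := K) (n := n)
      hab (by exact_mod_cast hf.contDiffOn) (right_mem_Icc.mpr hab)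
      (fun y hy => by rw [Real.norm_eq_abs, idw (n+1) le_rfl y hy]; exact hK y hy)
    rw [Real.norm_eq_abs, taylor_within_apply] at H
    have hsum : ∑ k ∈ Finset.range (n + 1),
        ((k.factorial : ℝ)⁻¹ * (x + t - x) ^ k) • iteratedDerivWithin k f (Icc x (x + t)) x
        = ∑ i ∈ Finset.range (n + 1), iteratedDeriv i f x * t ^ i / i.factorial := by
      refine Finset.sum_congr rfl fun i hi => ?_
      rw [idw i (le_trans (Finset.mem_range_succ_iff.mp hi) n.le_succ) x (left_mem_Icc.mpr hab)]
      have : x + t - x = t := by ring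
      rw [this, smul_eq_mul]; ring
    rw [hsum] at H
    calc _ ≤ K * (x + t - x) ^ (n + 1) / n.factorial := H
      _ ≤ K * t ^ (n+1) := by
          have : x + t - x = t := by ring
          rw [this, div_le_iff₀ (by positivity)]
          nlinarith [Nat.one_le_cast (α := ℝ) |>.mpr n.factorial_pos, pow_nonneg ht (n+1),
            mul_nonneg hK0 (pow_nonneg ht (n+1))]

lemma taylor_abs {n : ℕ} {f : ℝ → ℝ} (hf : ContDiff ℝ ((n:ℕ) + 1) f) {x t r K : ℝ}
    (htr : |t| ≤ r)
    (hK : ∀ y ∈ Icc (x - r) (x + r), |iteratedDeriv (n + 1) f y| ≤ K) :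
    |f (x + t) - ∑ i ∈ Finset.range (n + 1), iteratedDeriv i f x * t ^ i / i.factorial|
      ≤ K * r ^ (n + 1) := by
  have hr : 0 ≤ r := le_trans (abs_nonneg t) htr
  have hK0 : 0 ≤ K := le_trans (abs_nonneg _) (hK x ⟨by linarith, by linarith⟩)
  rcases le_or_gt 0 t with ht | ht
  · have htr' : t ≤ r := le_trans (le_abs_self t) htr
    have H := taylor_right hf ht (fun y hy => hK y ⟨by linarith [hy.1, hy.2], by linarith [hy.1, hy.2]⟩)
    calc _ ≤ K * t ^ (n+1) := H
      _ ≤ K * r ^ (n+1) := by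
          exact mul_le_mul_of_nonneg_left (pow_le_pow_left₀ ht htr' _) hK0
  · have hg : ContDiff ℝ ((n:ℕ) + 1) (fun y => f (-y)) := hf.comp (contDiff_id.neg)
    have ht' : (0:ℝ) ≤ -t := by linarith
    have htr' : -t ≤ r := by rw [abs_of_neg ht] at htr; linarith
    have hKg : ∀ y ∈ Icc (-x) (-x + -t), |iteratedDeriv (n + 1) (fun y => f (-y)) y| ≤ K := by
      intro y hy
      rw [iteratedDeriv_comp_neg]
      rw [smul_eq_mul, abs_mul, abs_pow, abs_neg, abs_one, one_pow, one_mul]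
      exact hK (-y) ⟨by linarith [hy.1, hy.2], by linarith [hy.1, hy.2]⟩
    have H := taylor_right hg ht' hKg
    have e1 : f (-(-x + -t)) = f (x + t) := by rw [show -(-x + -t) = x + t by ring]
    have e2 : ∑ i ∈ Finset.range (n + 1),
        iteratedDeriv i (fun y => f (-y)) (-x) * (-t) ^ i / i.factorial
        = ∑ i ∈ Finset.range (n + 1), iteratedDeriv i f x * t ^ i / i.factorial := by
      refine Finset.sum_congr rfl fun i _ => ?_
      rw [iteratedDeriv_comp_neg, neg_neg, smul_eq_mul]
      have h3 : ((-1:ℝ)) ^ i * (-t) ^ i = t ^ i := by rw [← mul_pow]; norm_num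
      calc (-1:ℝ) ^ i * iteratedDeriv i f x * (-t) ^ i / i.factorial
          = iteratedDeriv i f x * ((-1:ℝ) ^ i * (-t) ^ i) / i.factorial := by ring
        _ = iteratedDeriv i f x * t ^ i / i.factorial := by rw [h3]
    rw [e1, e2] at H
    calc _ ≤ K * (-t) ^ (n+1) := H
      _ ≤ K * r ^ (n+1) := mul_le_mul_of_nonneg_left (pow_le_pow_left₀ ht' htr' _) hK0


/-- For smooth `u` on `[0,1]`, the Hermitian-derivative defect satisfies
`(σ_x (u')* − δ_x u*)_j = (h⁴/180) u⁽⁵⁾(x_j) + O(h⁶)` at each interior point,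
where `u'` plays the role of the prescribed exact derivative values. -/
theorem simpson_deriv_minus_centeredDiff_truncation :
    ∃ C : ℝ, 0 < C ∧
      ∀ (u : ℝ → ℝ), ContDiff ℝ 7 u →
        ∀ K : ℝ, (∀ i ≤ 7, ∀ x ∈ Icc (0 : ℝ) 1, |iteratedDeriv i u x| ≤ K) →
          ∀ (N : ℕ), 2 ≤ N →
            ∀ h : ℝ, h = 1 / N →
              ∀ j : ℕ, 1 ≤ j → j ≤ N - 1 →
                |(deriv u ((j - 1 : ℕ) * h) + 4 * deriv u (j * h)
                      + deriv u ((j + 1 : ℕ) * h)) / 6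
                    - (u ((j + 1 : ℕ) * h) - u ((j - 1 : ℕ) * h)) / (2 * h)
                    - (h ^ 4 / 180) * iteratedDeriv 5 u (j * h)|
                  ≤ C * K * h ^ 6 := by
  refine ⟨2, by norm_num, ?_⟩
  intro u hu K hK N hN h hh j hj1 hj2
  have hN0 : (0:ℝ) < N := by
    have : (2:ℝ) ≤ N := by exact_mod_cast hN
    linarith
  have hh0 : 0 < h := by rw [hh]; positivity
  set x : ℝ := (j : ℝ) * h with hxdef
  have hjm : ((j - 1 : ℕ) : ℝ) = (j : ℝ) - 1 := by
    rw [Nat.cast_sub hj1, Nat.cast_one]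
  have hjp : ((j + 1 : ℕ) : ℝ) = (j : ℝ) + 1 := by push_cast; ring
  have hxm : ((j - 1 : ℕ) : ℝ) * h = x - h := by rw [hjm]; ring
  have hxp : ((j + 1 : ℕ) : ℝ) * h = x + h := by rw [hjp]; ring
  have hjN : j + 1 ≤ N := by omega
  have hx0 : 0 ≤ x - h := by
    rw [← hxm]
    exact mul_nonneg (Nat.cast_nonneg _) hh0.le
  have hx1 : x + h ≤ 1 := by
    rw [← hxp, hjp]
    have h1 : ((j : ℝ) + 1) ≤ N := by exact_mod_cast hjN
    have : ((j : ℝ) + 1) * h ≤ N * h := by nlinarith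
    calc ((j:ℝ)+1) * h ≤ (N:ℝ) * h := this
      _ = 1 := by rw [hh]; field_simp
  have hsub : Icc (x - h) (x + h) ⊆ Icc (0:ℝ) 1 := Icc_subset_Icc hx0 hx1
  have hK0 : 0 ≤ K := le_trans (abs_nonneg _) (hK 0 (by norm_num) 0 ⟨le_refl _, zero_le_one⟩)
  have hKin : ∀ i ≤ 7, ∀ y ∈ Icc (x - h) (x + h), |iteratedDeriv i u y| ≤ K :=
    fun i hi y hy => hK i hi y (hsub hy)
  have hid : ∀ i : ℕ, iteratedDeriv i (deriv u) = iteratedDeriv (i + 1) u :=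
    fun i => (iteratedDeriv_succ' (n := i) (f := u)).symm
  have hu7 : ContDiff ℝ ((6:ℕ) + (1:ℕ) : ℕ) u := by exact_mod_cast hu
  have hu' : ContDiff ℝ ((5:ℕ) + 1) (deriv u) := by
    have := ContDiff.iterate_deriv' 6 1 hu7
    exact_mod_cast (by simpa using this : ContDiff ℝ 6 (deriv u))
  have habs : |h| ≤ h := by rw [abs_of_pos hh0]
  have habsn : |(-h)| ≤ h := by rw [abs_neg, abs_of_pos hh0]
  have hb6 : ∀ y ∈ Icc (x - h) (x + h), |iteratedDeriv (5 + 1) (deriv u) y| ≤ K := by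
    intro y hy; rw [hid]; exact hKin 7 le_rfl y hy
  have hb7 : ∀ y ∈ Icc (x - h) (x + h), |iteratedDeriv (6 + 1) u y| ≤ K :=
    fun y hy => hKin 7 le_rfl y hy
  have T1 := taylor_abs (n := 5) hu' habs hb6
  have T2 := taylor_abs (n := 5) hu' habsn hb6
  have T3 := taylor_abs (n := 6) (by exact_mod_cast hu7) habs hb7
  have T4 := taylor_abs (n := 6) (by exact_mod_cast hu7) habsn hb7
  simp only [Finset.sum_range_succ, Finset.sum_range_zero, hid, zero_add] at T1 T2 T3 T4
  norm_num [Nat.factorial, iteratedDeriv_one, iteratedDeriv_zero] at T1 T2 T3 T4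
  rw [hxm, hxp, show x - h = x + -h by ring]
  set d1 := deriv u x
  set d2 := iteratedDeriv 2 u x
  set d3 := iteratedDeriv 3 u x
  set d4 := iteratedDeriv 4 u x
  set d5 := iteratedDeriv 5 u x
  set d6 := iteratedDeriv 6 u x
  set u0 := u x
  set R1 := deriv u (x + h) - (d1 + d2 * h + d3 * h ^ 2 / 2 + d4 * h ^ 3 / 6 +
      d5 * h ^ 4 / 24 + d6 * h ^ 5 / 120) with hR1
  set R2 := deriv u (x + -h) - (d1 + -(d2 * h) + d3 * h ^ 2 / 2 + d4 * (-h) ^ 3 / 6 +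
      d5 * h ^ 4 / 24 + d6 * (-h) ^ 5 / 120) with hR2
  set R3 := u (x + h) - (u0 + d1 * h + d2 * h ^ 2 / 2 + d3 * h ^ 3 / 6 +
      d4 * h ^ 4 / 24 + d5 * h ^ 5 / 120 + d6 * h ^ 6 / 720) with hR3
  set R4 := u (x + -h) - (u0 + -(d1 * h) + d2 * h ^ 2 / 2 + d3 * (-h) ^ 3 / 6 +
      d4 * h ^ 4 / 24 + d5 * (-h) ^ 5 / 120 + d6 * h ^ 6 / 720) with hR4
  have key : (deriv u (x + -h) + 4 * d1 + deriv u (x + h)) / 6 -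
      (u (x + h) - u (x + -h)) / (2 * h) - h ^ 4 / 180 * d5
      = (R1 + R2) / 6 - (R3 - R4) / (2 * h) := by
    rw [hR1, hR2, hR3, hR4]; field_simp; ring
  rw [key]
  have hKh6 : (0:ℝ) ≤ K * h ^ 6 := by positivity
  have h12 : |(R1 + R2) / 6| ≤ K * h ^ 6 / 3 := by
    have : |R1 + R2| ≤ 2 * (K * h ^ 6) := (abs_add_le _ _).trans (by linarith)
    rw [abs_div, abs_of_nonneg (by norm_num : (0:ℝ) ≤ 6)]
    linarith
  have h34 : |(R3 - R4) / (2 * h)| ≤ K * h ^ 6 := by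
    have hR : |R3 - R4| ≤ 2 * (K * h ^ 7) := (abs_sub _ _).trans (by linarith)
    rw [abs_div, abs_of_pos (by linarith : (0:ℝ) < 2 * h), div_le_iff₀ (by linarith)]
    calc |R3 - R4| ≤ 2 * (K * h ^ 7) := hR
      _ = K * h ^ 6 * (2 * h) := by ring
  calc |(R1 + R2) / 6 - (R3 - R4) / (2 * h)|
      ≤ |(R1 + R2) / 6| + |(R3 - R4) / (2 * h)| := abs_sub _ _
    _ ≤ 2 * K * h ^ 6 := by linarith
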